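/- Let a, b, c be the tree automorphisms of the binary tree defined by the wreath recursions a = σ(c,c), b = σ(a,a), c = (b,a) (automaton number 2277). Then a, b, c each have order 2, the subgroup H generated by x = cb and y = ab is free abelian of rank 2, H is a normal subgroup of index 2 in the group G₂₂₇₇ generated by a, b, c, and conjugation by b inverts both x and y; consequently G₂₂₇₇ ≅ C₂ ⋉ (ℤ × ℤ) where C₂ acts by inversion. -/

import Mathlib

/-- An invertible automaton over the two-letter alphabet `Bool`:
a set of states `Q`, a transition map and an output map such that each state
acts on the alphabet by a permutation. -/
structure BinAutomaton (Q : Type*) where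
  trans : Q → Bool → Q
  out : Q → Bool → Bool
  out_bij : ∀ q, Function.Bijective (out q)

namespace BinAutomaton

variable {Q : Type*} (A : BinAutomaton Q)

/-- The action of a state on finite binary words:
`q(xw) = ρ(q,x) · (τ(q,x))(w)`. -/
def act : Q → List Bool → List Bool
  | _, [] => []
  | q, x :: w => A.out q x :: act (A.trans q x) w

theorem act_injective (q : Q) : Function.Injective (A.act q) := by
  intro u
  induction u generalizing q with
  | nil =>
    intro v h
    cases v with
    | nil => rfl
    | cons y v => simp [act] at h
  | cons x u ih =>
    intro v h
    cases v with
    | nil => simp [act] at h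
    | cons y v =>
      simp only [act, List.cons.injEq] at h
      obtain ⟨h1, h2⟩ := h
      obtain rfl : x = y := (A.out_bij q).1 h1
      rw [ih _ h2]

theorem act_surjective (q : Q) : Function.Surjective (A.act q) := by
  intro v
  induction v generalizing q with
  | nil => exact ⟨[], rfl⟩
  | cons y v ih =>
    obtain ⟨x, hx⟩ := (A.out_bij q).2 y
    obtain ⟨w, hw⟩ := ih (A.trans q x)
    exact ⟨x :: w, by simp [act, hx, hw]⟩

/-- The tree automorphism defined by the state `q`. -/
noncomputable def perm (q : Q) : Equiv.Perm (List Bool) :=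
  Equiv.ofBijective (A.act q) ⟨A.act_injective q, A.act_surjective q⟩

/-- The group generated by the automaton: the subgroup of the group of
bijections of the binary tree generated by the states. -/
noncomputable def autGroup : Subgroup (Equiv.Perm (List Bool)) :=
  Subgroup.closure (Set.range A.perm)

end BinAutomaton

/-- Helper constructing a 3-state automaton from the sections at `0`, the
sections at `1`, and the activity of each state. -/
def mkAut3 (t0 t1 : Fin 3 → Fin 3) (actv : Fin 3 → Bool) : BinAutomaton (Fin 3) where
  trans q x := cond x (t1 q) (t0 q)
  out q x := xor (actv q) x
  out_bij q := by
    have h : ∀ b : Bool, Function.Bijective fun x => xor b x := by decide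
    exact h (actv q)

/-- The action of `C₂` on `ℤ × ℤ` (written multiplicatively) by inversion. -/
def invAction : Multiplicative (ZMod 2) →* MulAut (Multiplicative ℤ × Multiplicative ℤ) :=
  MonoidHom.mk'
    (fun g => (MulEquiv.inv (Multiplicative ℤ × Multiplicative ℤ)) ^ g.toAdd.val)
    (by
      intro x y
      have hsq' : (MulEquiv.inv (Multiplicative ℤ × Multiplicative ℤ)) *
          (MulEquiv.inv (Multiplicative ℤ × Multiplicative ℤ)) = 1 := by
        ext z <;> simp [MulAut.mul_apply, MulAut.one_apply]
      have hsq : (MulEquiv.inv (Multiplicative ℤ × Multiplicative ℤ)) ^ 2 = 1 := by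
        rw [pow_two]; exact hsq'
      show _ ^ ((x.toAdd + y.toAdd).val) = _
      rw [ZMod.val_add, ← pow_eq_pow_mod _ hsq, pow_add])

/-- The semidirect product `C₂ ⋉ (ℤ × ℤ)` where `C₂` acts by inverting both
coordinates. -/
abbrev C2LtimesZ2 : Type :=
  SemidirectProduct (Multiplicative ℤ × Multiplicative ℤ)
    (Multiplicative (ZMod 2)) invAction

/-- Automaton number 2277:
`a = σ(c,c)`, `b = σ(a,a)`, `c = (b,a)` (states `0 = a`, `1 = b`, `2 = c`). -/
def A2277 : BinAutomaton (Fin 3) :=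
  mkAut3 ![2, 0, 1] ![2, 0, 0] ![true, true, false]

noncomputable def a : Equiv.Perm (List Bool) := A2277.perm 0
noncomputable def b : Equiv.Perm (List Bool) := A2277.perm 1
noncomputable def c : Equiv.Perm (List Bool) := A2277.perm 2


namespace Aut2277

lemma perm_apply_inv_self (f : Equiv.Perm (List Bool)) (w : List Bool) : f (f⁻¹ w) = w :=
  Equiv.apply_symm_apply f w

/-- `efun g h` : the map `0w ↦ 0·g(w)`, `1w ↦ 1·h(w)`. -/
def efun (g h : List Bool → List Bool) : List Bool → List Bool
  | [] => []
  | false :: w => false :: g w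
  | true :: w => true :: h w

/-- `ofun g h` : the map `0w ↦ 1·g(w)`, `1w ↦ 0·h(w)`. -/
def ofun (g h : List Bool → List Bool) : List Bool → List Bool
  | [] => []
  | false :: w => true :: g w
  | true :: w => false :: h w

/-- The automorphism `(g, h)`. -/
def E (g h : Equiv.Perm (List Bool)) : Equiv.Perm (List Bool) where
  toFun := efun g h
  invFun := efun g.symm h.symm
  left_inv := by
    intro w
    match w with
    | [] => rfl
    | false :: w => simp [efun]
    | true :: w => simp [efun]
  right_inv := by
    intro w
    match w with
    | [] => rfl
    | false :: w => simp [efun]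
    | true :: w => simp [efun]

/-- The automorphism `σ(g, h)`. -/
def O (g h : Equiv.Perm (List Bool)) : Equiv.Perm (List Bool) where
  toFun := ofun g h
  invFun := ofun h.symm g.symm
  left_inv := by
    intro w
    match w with
    | [] => rfl
    | false :: w => simp [ofun]
    | true :: w => simp [ofun]
  right_inv := by
    intro w
    match w with
    | [] => rfl
    | false :: w => simp [ofun]
    | true :: w => simp [ofun]

@[simp] lemma E_nil (g h : Equiv.Perm (List Bool)) : E g h [] = [] := rfl
@[simp] lemma E_cons_false (g h : Equiv.Perm (List Bool)) (w : List Bool) :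
    E g h (false :: w) = false :: g w := rfl
@[simp] lemma E_cons_true (g h : Equiv.Perm (List Bool)) (w : List Bool) :
    E g h (true :: w) = true :: h w := rfl
@[simp] lemma O_nil (g h : Equiv.Perm (List Bool)) : O g h [] = [] := rfl
@[simp] lemma O_cons_false (g h : Equiv.Perm (List Bool)) (w : List Bool) :
    O g h (false :: w) = true :: g w := rfl
@[simp] lemma O_cons_true (g h : Equiv.Perm (List Bool)) (w : List Bool) :
    O g h (true :: w) = false :: h w := rfl

lemma E_mul_E (g h g' h' : Equiv.Perm (List Bool)) :
    E g h * E g' h' = E (g * g') (h * h') := by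
  ext w
  match w with
  | [] => rfl
  | false :: w => simp [Equiv.Perm.mul_apply]
  | true :: w => simp [Equiv.Perm.mul_apply]

lemma E_mul_O (g h g' h' : Equiv.Perm (List Bool)) :
    E g h * O g' h' = O (h * g') (g * h') := by
  ext w
  match w with
  | [] => rfl
  | false :: w => simp [Equiv.Perm.mul_apply]
  | true :: w => simp [Equiv.Perm.mul_apply]

lemma O_mul_E (g h g' h' : Equiv.Perm (List Bool)) :
    O g h * E g' h' = O (g * g') (h * h') := by
  ext w
  match w with
  | [] => rfl
  | false :: w => simp [Equiv.Perm.mul_apply]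
  | true :: w => simp [Equiv.Perm.mul_apply]

lemma O_mul_O (g h g' h' : Equiv.Perm (List Bool)) :
    O g h * O g' h' = E (h * g') (g * h') := by
  ext w
  match w with
  | [] => rfl
  | false :: w => simp [Equiv.Perm.mul_apply]
  | true :: w => simp [Equiv.Perm.mul_apply]

@[simp] lemma E_one : E 1 1 = 1 := by
  ext w
  match w with
  | [] => rfl
  | false :: w => simp
  | true :: w => simp

lemma E_eq_one {g h : Equiv.Perm (List Bool)} (hE : E g h = 1) : g = 1 ∧ h = 1 := by
  refine ⟨Equiv.ext fun w => ?_, Equiv.ext fun w => ?_⟩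
  · have := Equiv.ext_iff.1 hE (false :: w)
    simpa using this
  · have := Equiv.ext_iff.1 hE (true :: w)
    simpa using this

lemma O_ne_one (g h : Equiv.Perm (List Bool)) : O g h ≠ 1 := by
  intro hO
  have := Equiv.ext_iff.1 hO [false]
  simp at this

/-- The monoid hom view of `E`, to get powers for free. -/
noncomputable def EE : Equiv.Perm (List Bool) × Equiv.Perm (List Bool) →* Equiv.Perm (List Bool) :=
  MonoidHom.mk' (fun p => E p.1 p.2) (fun p q => (E_mul_E p.1 p.2 q.1 q.2).symm)

lemma E_zpow (g h : Equiv.Perm (List Bool)) (k : ℤ) : (E g h) ^ k = E (g ^ k) (h ^ k) := by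
  have : (E g h) ^ k = EE ((g, h) ^ k) := (map_zpow EE (g, h) k).symm
  simpa [EE, Prod.pow_def] using this

-- basic forms of the generators
@[simp] lemma perm_apply (q : Fin 3) (w : List Bool) : A2277.perm q w = A2277.act q w := rfl

lemma a_eq : a = O c c := by
  ext w
  match w with
  | [] => rfl
  | false :: w => rfl
  | true :: w => rfl

lemma b_eq : b = O a a := by
  ext w
  match w with
  | [] => rfl
  | false :: w => rfl
  | true :: w => rfl

lemma c_eq : c = E b a := by
  ext w
  match w with
  | [] => rfl
  | false :: w => rfl
  | true :: w => rfl


-- pointwise evaluation of the generators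
@[simp] lemma a_nil : a [] = [] := rfl
@[simp] lemma b_nil : b [] = [] := rfl
@[simp] lemma c_nil : c [] = [] := rfl
@[simp] lemma a_cons_false (w : List Bool) : a (false :: w) = true :: c w := rfl
@[simp] lemma a_cons_true (w : List Bool) : a (true :: w) = false :: c w := rfl
@[simp] lemma b_cons_false (w : List Bool) : b (false :: w) = true :: a w := rfl
@[simp] lemma b_cons_true (w : List Bool) : b (true :: w) = false :: a w := rfl
@[simp] lemma c_cons_false (w : List Bool) : c (false :: w) = false :: b w := rfl
@[simp] lemma c_cons_true (w : List Bool) : c (true :: w) = true :: a w := rfl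

-- the generators are involutions
lemma sq_aux : ∀ n : ℕ, ∀ w : List Bool, w.length ≤ n →
    a (a w) = w ∧ b (b w) = w ∧ c (c w) = w := by
  intro n
  induction n with
  | zero =>
    intro w hw
    rw [List.length_eq_zero_iff.1 (Nat.le_zero.1 hw)]
    exact ⟨rfl, rfl, rfl⟩
  | succ n ih =>
    intro w hw
    match w with
    | [] => exact ⟨rfl, rfl, rfl⟩
    | v :: w' =>
      have hw' : w'.length ≤ n := by simpa using hw
      obtain ⟨ha, hb, hc⟩ := ih w' hw'
      cases v <;> exact ⟨by simp [ha, hb, hc], by simp [ha, hb, hc], by simp [ha, hb, hc]⟩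

lemma a_mul_a : a * a = 1 :=
  Equiv.ext fun w => (sq_aux w.length w le_rfl).1
lemma b_mul_b : b * b = 1 :=
  Equiv.ext fun w => (sq_aux w.length w le_rfl).2.1
lemma c_mul_c : c * c = 1 :=
  Equiv.ext fun w => (sq_aux w.length w le_rfl).2.2

lemma a_inv : a⁻¹ = a := inv_eq_of_mul_eq_one_right a_mul_a
lemma b_inv : b⁻¹ = b := inv_eq_of_mul_eq_one_right b_mul_b
lemma c_inv : c⁻¹ = c := inv_eq_of_mul_eq_one_right c_mul_c

noncomputable def x : Equiv.Perm (List Bool) := c * b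
noncomputable def y : Equiv.Perm (List Bool) := a * b
noncomputable def z : Equiv.Perm (List Bool) := c * a

lemma x_def : x = c * b := rfl
lemma y_def : y = a * b := rfl
lemma z_def : z = c * a := rfl

lemma x_inv : x⁻¹ = b * c := by rw [x_def, mul_inv_rev, b_inv, c_inv]
lemma y_inv : y⁻¹ = b * a := by rw [y_def, mul_inv_rev, b_inv, a_inv]
lemma z_inv : z⁻¹ = a * c := by rw [z_def, mul_inv_rev, a_inv, c_inv]

lemma x_eq : x = O 1 y⁻¹ := by
  have h1 : c * b = E b a * O a a := by rw [← c_eq, ← b_eq]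
  rw [x_def, h1, E_mul_O, a_mul_a, ← y_inv]

lemma y_eq : y = E z z := by
  have h1 : a * b = O c c * O a a := by rw [← a_eq, ← b_eq]
  rw [y_def, h1, O_mul_O, ← z_def]

lemma z_eq : z = O z⁻¹ x⁻¹ := by
  have h1 : c * a = E b a * O c c := by rw [← c_eq, ← a_eq]
  conv_lhs => rw [z_def, h1, E_mul_O]
  rw [← z_inv, ← x_inv]

lemma z_mul_y : z * y = x := by
  rw [z_def, y_def, x_def, mul_assoc, ← mul_assoc a, a_mul_a, one_mul]
lemma x_mul_yinv : x * y⁻¹ = z := by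
  rw [x_def, y_inv, z_def, mul_assoc, ← mul_assoc b, b_mul_b, one_mul]

-- pointwise evaluation of x, y, z
lemma z_cons_false (w : List Bool) : z (false :: w) = true :: z⁻¹ w := by
  conv_lhs => rw [z_eq]
  rfl
lemma z_cons_true (w : List Bool) : z (true :: w) = false :: x⁻¹ w := by
  conv_lhs => rw [z_eq]
  rfl
lemma y_cons_false (w : List Bool) : y (false :: w) = false :: z w := by
  conv_lhs => rw [y_eq]
  rfl
lemma y_cons_true (w : List Bool) : y (true :: w) = true :: z w := by
  conv_lhs => rw [y_eq]
  rfl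
lemma x_cons_false (w : List Bool) : x (false :: w) = true :: w := by
  conv_lhs => rw [x_eq]
  simp
lemma x_cons_true (w : List Bool) : x (true :: w) = false :: y⁻¹ w := by
  conv_lhs => rw [x_eq]
  rfl

-- length preservation
lemma act_length (q : Fin 3) (w : List Bool) : (A2277.act q w).length = w.length := by
  induction w generalizing q with
  | nil => rfl
  | cons v w ih => simp [BinAutomaton.act, ih]

lemma x_length (w : List Bool) : (x w).length = w.length := by
  rw [x_def]
  simp only [Equiv.Perm.mul_apply]
  show (A2277.act 2 (A2277.act 1 w)).length = _
  rw [act_length, act_length]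

lemma xinv_length (w : List Bool) : (x⁻¹ w).length = w.length := by
  conv_rhs => rw [← perm_apply_inv_self x w]
  rw [x_length]

-- the key relation y * z = x
lemma yzx_aux : ∀ n : ℕ, ∀ w : List Bool, w.length ≤ n → y (z w) = x w := by
  intro n
  induction n with
  | zero =>
    intro w hw
    rw [List.length_eq_zero_iff.1 (Nat.le_zero.1 hw)]
    rfl
  | succ n ih =>
    intro w hw
    match w with
    | [] => rfl
    | false :: w' =>
      rw [z_cons_false, y_cons_true, x_cons_false, perm_apply_inv_self]
    | true :: w' =>
      have hw' : w'.length ≤ n := by simpa using hw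
      rw [z_cons_true, y_cons_false, x_cons_true]
      have hlen : (x⁻¹ w').length ≤ n := by rw [xinv_length]; exact hw'
      have h1 : y (z (x⁻¹ w')) = w' := by
        rw [ih _ hlen, perm_apply_inv_self]
      have h2 : z (x⁻¹ w') = y⁻¹ w' := by
        apply y.injective
        rw [h1, perm_apply_inv_self]
      rw [h2]

lemma y_mul_z : y * z = x :=
  Equiv.ext fun w => yzx_aux w.length w le_rfl

lemma com_xy : Commute x y := by
  have h : y * x = x * y := by
    conv_lhs => rw [← z_mul_y, ← mul_assoc, y_mul_z]
  exact h.symm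

lemma x_sq : x * x = E y⁻¹ y⁻¹ := by
  rw [x_eq, O_mul_O, one_mul, mul_one]

lemma key_even (k n : ℤ) :
    x ^ (2 * k) * y ^ n = E (x ^ n * y ^ (-k - n)) (x ^ n * y ^ (-k - n)) := by
  have hx2 : x ^ (2 : ℤ) = E y⁻¹ y⁻¹ := by rw [zpow_two, x_sq]
  have h1 : x ^ (2 * k) = E (y ^ (-k)) (y ^ (-k)) := by
    rw [zpow_mul, hx2, E_zpow]
    congr 1 <;> rw [inv_zpow, ← zpow_neg]
  have h2 : y ^ n = E (z ^ n) (z ^ n) := by rw [y_eq, E_zpow]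
  rw [h1, h2, E_mul_E]
  have h3 : z ^ n = x ^ n * y ^ (-n) := by
    rw [← x_mul_yinv, com_xy.inv_right.mul_zpow, inv_zpow, ← zpow_neg]
  have h4 : y ^ (-k) * (x ^ n * y ^ (-n)) = x ^ n * y ^ (-k - n) := by
    rw [← mul_assoc, (com_xy.symm.zpow_zpow (-k) n).eq, mul_assoc, ← zpow_add]
    ring_nf
  rw [h3, h4]

lemma descent {m n : ℤ} (h : x ^ m * y ^ n = 1) :
    ∃ k : ℤ, m = 2 * k ∧ x ^ n * y ^ (-k - n) = 1 := by
  rcases Int.even_or_odd m with ⟨k, hk⟩ | ⟨k, hk⟩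
  · refine ⟨k, by omega, ?_⟩
    have hm : m = 2 * k := by omega
    rw [hm, key_even] at h
    exact ((E_eq_one h).1)
  · exfalso
    have hm : m = 2 * k + 1 := by omega
    have hxs : x ^ m = x ^ (2 * k) * x := by rw [hm, zpow_add, zpow_one]
    rw [hxs, mul_assoc, (com_xy.zpow_right n).eq, ← mul_assoc] at h
    rw [key_even, x_eq, E_mul_O] at h
    exact O_ne_one _ _ h

lemma free_pow : ∀ N : ℕ, ∀ m n : ℤ, x ^ m * y ^ n = 1 → (2 ^ N : ℤ) ∣ m ∧ (2 ^ N : ℤ) ∣ n := by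
  intro N
  induction N with
  | zero => intro m n _; simp
  | succ N ih =>
    intro m n h
    obtain ⟨k, hk, h1⟩ := descent h
    obtain ⟨j, hj, h2⟩ := descent h1
    obtain ⟨hn1, hkn1⟩ := ih _ _ h1
    obtain ⟨hkn2, hj2⟩ := ih _ _ h2
    have hdk : (2 ^ N : ℤ) ∣ k := by
      have h5 : (2 ^ N : ℤ) ∣ (-k - n) + n := dvd_add hkn1 hn1
      have h6 : (-k - n) + n = -k := by ring
      rw [h6] at h5
      simpa using h5.neg_right
    have hdj : (2 ^ N : ℤ) ∣ j := by
      have h5 : (2 ^ N : ℤ) ∣ (-j - (-k - n)) + (-k - n) := dvd_add hj2 hkn1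
      have h6 : (-j - (-k - n)) + (-k - n) = -j := by ring
      rw [h6] at h5
      simpa using h5.neg_right
    constructor
    · rw [hk, pow_succ, mul_comm ((2:ℤ)^N) 2]
      exact mul_dvd_mul_left 2 hdk
    · rw [hj, pow_succ, mul_comm ((2:ℤ)^N) 2]
      exact mul_dvd_mul_left 2 hdj

lemma free (m n : ℤ) (h : x ^ m * y ^ n = 1) : m = 0 ∧ n = 0 := by
  have key : ∀ t : ℤ, (∀ N : ℕ, (2 ^ N : ℤ) ∣ t) → t = 0 := by
    intro t ht
    by_contra h0
    have h1 : (2 ^ t.natAbs : ℤ) ≤ |t| :=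
      Int.le_of_dvd (abs_pos.mpr h0) ((dvd_abs _ _).2 (ht _))
    have h2 : (t.natAbs : ℤ) < 2 ^ t.natAbs := by
      exact_mod_cast (Nat.lt_two_pow_self (n := t.natAbs))
    have h3 : |t| = (t.natAbs : ℤ) := Int.abs_eq_natAbs t
    omega
  exact ⟨key m fun N => (free_pow N m n h).1, key n fun N => (free_pow N m n h).2⟩


-- ### The subgroups H = ⟨x,y⟩ and G = ⟨a,b,c⟩

noncomputable abbrev Hgrp : Subgroup (Equiv.Perm (List Bool)) := Subgroup.closure {x, y}
noncomputable abbrev Ggrp : Subgroup (Equiv.Perm (List Bool)) := Subgroup.closure {a, b, c}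

lemma x_mem_H : x ∈ Hgrp := Subgroup.subset_closure (by simp)
lemma y_mem_H : y ∈ Hgrp := Subgroup.subset_closure (by simp)
lemma a_mem_G : a ∈ Ggrp := Subgroup.subset_closure (by simp)
lemma b_mem_G : b ∈ Ggrp := Subgroup.subset_closure (by simp)
lemma c_mem_G : c ∈ Ggrp := Subgroup.subset_closure (by simp)
lemma x_mem_G : x ∈ Ggrp := x_def ▸ mul_mem c_mem_G b_mem_G
lemma y_mem_G : y ∈ Ggrp := y_def ▸ mul_mem a_mem_G b_mem_G

lemma pow_mem_H (m n : ℤ) : x ^ m * y ^ n ∈ Hgrp :=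
  mul_mem (zpow_mem x_mem_H m) (zpow_mem y_mem_H n)

lemma mulform (m n p q : ℤ) :
    (x ^ m * y ^ n) * (x ^ p * y ^ q) = x ^ (m + p) * y ^ (n + q) := by
  have hc : y ^ n * x ^ p = x ^ p * y ^ n := (com_xy.symm.zpow_zpow n p).eq
  calc (x ^ m * y ^ n) * (x ^ p * y ^ q)
      = x ^ m * ((y ^ n * x ^ p) * y ^ q) := by rw [mul_assoc, ← mul_assoc (y ^ n)]
    _ = x ^ m * ((x ^ p * y ^ n) * y ^ q) := by rw [hc]
    _ = (x ^ m * x ^ p) * (y ^ n * y ^ q) := by rw [mul_assoc (x ^ p), ← mul_assoc, mul_assoc]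
    _ = x ^ (m + p) * y ^ (n + q) := by rw [← zpow_add, ← zpow_add]

lemma Hinv (m n : ℤ) : (x ^ m * y ^ n)⁻¹ = x ^ (-m) * y ^ (-n) := by
  symm
  apply eq_inv_of_mul_eq_one_left
  rw [mulform]
  simp

lemma mem_H_iff {g : Equiv.Perm (List Bool)} :
    g ∈ Hgrp ↔ ∃ m n : ℤ, g = x ^ m * y ^ n := by
  constructor
  · intro hg
    induction hg using Subgroup.closure_induction with
    | mem g hg =>
      rcases hg with rfl | rfl
      · exact ⟨1, 0, by simp⟩
      · exact ⟨0, 1, by simp⟩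
    | one => exact ⟨0, 0, by simp⟩
    | mul g g' _ _ ihg ihg' =>
      obtain ⟨m, n, rfl⟩ := ihg
      obtain ⟨p, q, rfl⟩ := ihg'
      exact ⟨m + p, n + q, mulform m n p q⟩
    | inv g _ ihg =>
      obtain ⟨m, n, rfl⟩ := ihg
      exact ⟨-m, -n, Hinv m n⟩
  · rintro ⟨m, n, rfl⟩
    exact pow_mem_H m n

lemma Hcomm {g h : Equiv.Perm (List Bool)} (hg : g ∈ Hgrp) (hh : h ∈ Hgrp) :
    g * h = h * g := by
  obtain ⟨m, n, rfl⟩ := mem_H_iff.1 hg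
  obtain ⟨p, q, rfl⟩ := mem_H_iff.1 hh
  rw [mulform, mulform, add_comm m p, add_comm n q]

lemma b_conj_x : b * x * b⁻¹ = x⁻¹ := by
  rw [b_inv, x_inv, x_def, mul_assoc, mul_assoc, b_mul_b, mul_one]

lemma b_conj_y : b * y * b⁻¹ = y⁻¹ := by
  rw [b_inv, y_inv, y_def, mul_assoc, mul_assoc, b_mul_b, mul_one]

lemma b_conj_form (m n : ℤ) :
    b * (x ^ m * y ^ n) * b⁻¹ = x ^ (-m) * y ^ (-n) := by
  calc b * (x ^ m * y ^ n) * b⁻¹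
      = (MulAut.conj b) (x ^ m * y ^ n) := by rw [MulAut.conj_apply]
    _ = ((MulAut.conj b) x) ^ m * ((MulAut.conj b) y) ^ n := by
        rw [map_mul, map_zpow, map_zpow]
    _ = (x⁻¹) ^ m * (y⁻¹) ^ n := by
        rw [MulAut.conj_apply, MulAut.conj_apply, b_conj_x, b_conj_y]
    _ = x ^ (-m) * y ^ (-n) := by rw [inv_zpow, inv_zpow, ← zpow_neg, ← zpow_neg]

lemma b_conj_H {g : Equiv.Perm (List Bool)} (hg : g ∈ Hgrp) : b * g * b⁻¹ ∈ Hgrp := by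
  obtain ⟨m, n, rfl⟩ := mem_H_iff.1 hg
  rw [b_conj_form]
  exact pow_mem_H _ _

lemma G_decomp {g : Equiv.Perm (List Bool)} (hg : g ∈ Ggrp) :
    g ∈ Hgrp ∨ g * b ∈ Hgrp := by
  induction hg using Subgroup.closure_induction with
  | mem g hg =>
    simp only [Set.mem_insert_iff, Set.mem_singleton_iff] at hg
    rcases hg with rfl | rfl | rfl
    · exact Or.inr (y_def ▸ y_mem_H)
    · exact Or.inr (b_mul_b ▸ one_mem _)
    · exact Or.inr (x_def ▸ x_mem_H)
  | one => exact Or.inl (one_mem _)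
  | mul g g' _ _ ihg ihg' =>
    rcases ihg with h | h <;> rcases ihg' with h' | h'
    · exact Or.inl (mul_mem h h')
    · right
      rw [mul_assoc]
      exact mul_mem h h'
    · right
      have e : (g * b) * (b * g' * b⁻¹) = g * g' * b := by
        rw [b_inv]
        have h2 : (g * b) * (b * g' * b) = g * (b * b) * (g' * b) := by group
        rw [h2, b_mul_b, mul_one, ← mul_assoc]
      rw [← e]
      exact mul_mem h (b_conj_H h')
    · left
      have e : (g * b) * (b * (g' * b) * b⁻¹) = g * g' := by
        rw [b_inv]
        have h2 : (g * b) * (b * (g' * b) * b) = g * (b * b) * g' * (b * b) := by group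
        rw [h2, b_mul_b, mul_one, mul_one]
      rw [← e]
      exact mul_mem h (b_conj_H h')
  | inv g _ ihg =>
    rcases ihg with h | h
    · exact Or.inl (inv_mem h)
    · right
      have h1 : b * g⁻¹ ∈ Hgrp := by
        have e : b * g⁻¹ = (g * b)⁻¹ := by rw [mul_inv_rev, b_inv]
        rw [e]
        exact inv_mem h
      have e : b * (b * g⁻¹) * b⁻¹ = g⁻¹ * b := by
        rw [b_inv]
        have h2 : b * (b * g⁻¹) * b = (b * b) * (g⁻¹ * b) := by group
        rw [h2, b_mul_b, one_mul]
      rw [← e]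
      exact b_conj_H h1

lemma b_not_mem_H : b ∉ Hgrp := by
  intro hb
  have h1 : b * x * b⁻¹ = x := by
    rw [Hcomm hb x_mem_H, mul_inv_cancel_right]
  have h2 : x⁻¹ = x := by rw [← b_conj_x, h1]
  have h4 : x * x = 1 := by
    nth_rewrite 1 [← h2]
    exact inv_mul_cancel x
  have h5 : x ^ (2 : ℤ) * y ^ (0 : ℤ) = 1 := by
    rw [zpow_zero, mul_one, zpow_two, h4]
  obtain ⟨h6, -⟩ := free 2 0 h5
  norm_num at h6

lemma conj_by_H {p q : Equiv.Perm (List Bool)} (hp : p ∈ Hgrp) (hq : q ∈ Hgrp) :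
    p * q * p⁻¹ ∈ Hgrp := by
  rw [Hcomm hp hq, mul_inv_cancel_right]
  exact hq

lemma conj_mem {g h : Equiv.Perm (List Bool)} (hg : g ∈ Ggrp) (hh : h ∈ Hgrp) :
    g * h * g⁻¹ ∈ Hgrp := by
  rcases G_decomp hg with h1 | h1
  · exact conj_by_H h1 hh
  · have e : (g * b) * (b * h * b⁻¹) * (g * b)⁻¹ = g * h * g⁻¹ := by
      rw [b_inv, mul_inv_rev, b_inv]
      have h2 : (g * b) * (b * h * b) * (b * g⁻¹) = g * (b * b) * h * (b * b) * g⁻¹ := by group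
      rw [h2, b_mul_b, mul_one, mul_one]
    rw [← e]
    exact conj_by_H h1 (b_conj_H hh)

lemma H_normal_in_G : (Hgrp.subgroupOf Ggrp).Normal := by
  refine ⟨?_⟩
  intro n hn g
  rw [Subgroup.mem_subgroupOf] at hn ⊢
  have e : ((g * n * g⁻¹ : Ggrp) : Equiv.Perm (List Bool)) = ↑g * ↑n * (↑g : Equiv.Perm (List Bool))⁻¹ := by
    simp
  rw [e]
  exact conj_mem g.2 hn

lemma relindex_two : Hgrp.relIndex Ggrp = 2 := by
  rw [Subgroup.relIndex, Subgroup.index_eq_two_iff]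
  refine ⟨⟨b, b_mem_G⟩, fun g => ?_⟩
  by_cases hgH : (g : Equiv.Perm (List Bool)) ∈ Hgrp
  · refine Or.inr ⟨by rwa [Subgroup.mem_subgroupOf], fun hA => ?_⟩
    rw [Subgroup.mem_subgroupOf] at hA
    have hA' : (g : Equiv.Perm (List Bool)) * b ∈ Hgrp := hA
    have hb : b ∈ Hgrp := by
      have e : b = (↑g : Equiv.Perm (List Bool))⁻¹ * (↑g * b) := by
        rw [← mul_assoc, inv_mul_cancel, one_mul]
      rw [e]
      exact mul_mem (inv_mem hgH) hA'
    exact b_not_mem_H hb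
  · refine Or.inl ⟨?_, fun hB => ?_⟩
    · rw [Subgroup.mem_subgroupOf]
      rcases G_decomp g.2 with h | h
      · exact absurd h hgH
      · exact h
    · rw [Subgroup.mem_subgroupOf] at hB
      exact hgH hB

-- ### The isomorphism with C₂ ⋉ ℤ²

lemma zmod2_cases (u : ZMod 2) : u = 0 ∨ u = 1 := by revert u; decide

noncomputable def fH : Multiplicative ℤ × Multiplicative ℤ →* Equiv.Perm (List Bool) :=
  MonoidHom.mk' (fun p => x ^ p.1.toAdd * y ^ p.2.toAdd)
    (by
      intro p q
      simp only [Prod.fst_mul, Prod.snd_mul, toAdd_mul]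
      exact (mulform _ _ _ _).symm)

noncomputable def fB : Multiplicative (ZMod 2) →* Equiv.Perm (List Bool) :=
  MonoidHom.mk' (fun g => b ^ g.toAdd.val)
    (by
      intro u v
      have hsq : b ^ 2 = 1 := by rw [pow_two]; exact b_mul_b
      show b ^ ((u.toAdd + v.toAdd).val) = b ^ u.toAdd.val * b ^ v.toAdd.val
      rw [ZMod.val_add, ← pow_eq_pow_mod _ hsq, pow_add])

lemma compat : ∀ g, fH.comp ((invAction g)).toMonoidHom
    = (MulAut.conj (fB g)).toMonoidHom.comp fH := by
  intro g
  refine MonoidHom.ext fun p => ?_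
  show fH ((invAction g) p) = (MulAut.conj (fB g)) (fH p)
  rcases zmod2_cases g.toAdd with hg | hg
  · have hval : g.toAdd.val = 0 := by rw [hg]; rfl
    have h1 : (invAction g) p = p := by
      show ((MulEquiv.inv _) ^ g.toAdd.val) p = p
      rw [hval, pow_zero]
      rfl
    have h2 : fB g = 1 := by
      show b ^ g.toAdd.val = 1
      rw [hval, pow_zero]
    rw [h1, h2, MulAut.conj_apply]
    simp
  · have hval : g.toAdd.val = 1 := by rw [hg]; rfl
    have h1 : (invAction g) p = p⁻¹ := by
      show ((MulEquiv.inv _) ^ g.toAdd.val) p = p⁻¹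
      rw [hval, pow_one]
      rfl
    have h2 : fB g = b := by
      show b ^ g.toAdd.val = b
      rw [hval, pow_one]
    rw [h1, h2, map_inv, MulAut.conj_apply]
    show (x ^ p.1.toAdd * y ^ p.2.toAdd)⁻¹ = b * (x ^ p.1.toAdd * y ^ p.2.toAdd) * b⁻¹
    rw [Hinv, b_conj_form]

noncomputable def φ : C2LtimesZ2 →* Equiv.Perm (List Bool) :=
  SemidirectProduct.lift fH fB compat

lemma phi_apply (p : Multiplicative ℤ × Multiplicative ℤ) (g : Multiplicative (ZMod 2)) :
    φ ⟨p, g⟩ = x ^ p.1.toAdd * y ^ p.2.toAdd * b ^ g.toAdd.val := rfl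

lemma phi_inj : Function.Injective φ := by
  refine (injective_iff_map_eq_one φ).2 ?_
  rintro ⟨p, g⟩ hs
  rw [phi_apply] at hs
  rcases zmod2_cases g.toAdd with hg | hg
  · have hval : g.toAdd.val = 0 := by rw [hg]; rfl
    rw [hval, pow_zero, mul_one] at hs
    obtain ⟨hm, hn⟩ := free _ _ hs
    have hp1 : p.1 = 1 := by
      have := hm
      exact toAdd_eq_zero.1 hm
    have hp2 : p.2 = 1 := toAdd_eq_zero.1 hn
    have hg1 : g = 1 := by
      have : g.toAdd = 0 := hg
      exact toAdd_eq_zero.1 this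
    have hp : p = 1 := Prod.ext hp1 hp2
    rw [hp, hg1]
    rfl
  · exfalso
    have hval : g.toAdd.val = 1 := by rw [hg]; rfl
    rw [hval, pow_one] at hs
    have hb : b ∈ Hgrp := by
      have e : b = (x ^ p.1.toAdd * y ^ p.2.toAdd)⁻¹ := eq_inv_of_mul_eq_one_right hs
      rw [e, Hinv]
      exact pow_mem_H _ _
    exact b_not_mem_H hb

lemma phi_range : φ.range = Ggrp := by
  apply le_antisymm
  · rintro t ⟨⟨p, g⟩, rfl⟩
    rw [phi_apply]
    exact mul_mem (mul_mem (zpow_mem x_mem_G _) (zpow_mem y_mem_G _)) (pow_mem b_mem_G _)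
  · rw [Subgroup.closure_le]
    rintro t ht
    simp only [Set.mem_insert_iff, Set.mem_singleton_iff] at ht
    rcases ht with rfl | rfl | rfl
    · refine ⟨⟨(1, Multiplicative.ofAdd 1), Multiplicative.ofAdd 1⟩, ?_⟩
      have e : φ ⟨(1, Multiplicative.ofAdd 1), Multiplicative.ofAdd 1⟩
          = x ^ (0 : ℤ) * y ^ (1 : ℤ) * b ^ 1 := rfl
      rw [e, zpow_zero, one_mul, zpow_one, pow_one, y_def, mul_assoc, b_mul_b, mul_one]
    · refine ⟨⟨1, Multiplicative.ofAdd 1⟩, ?_⟩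
      have e : φ ⟨1, Multiplicative.ofAdd 1⟩
          = x ^ (0 : ℤ) * y ^ (0 : ℤ) * b ^ 1 := rfl
      rw [e, zpow_zero, zpow_zero, one_mul, one_mul, pow_one]
    · refine ⟨⟨(Multiplicative.ofAdd 1, 1), Multiplicative.ofAdd 1⟩, ?_⟩
      have e : φ ⟨(Multiplicative.ofAdd 1, 1), Multiplicative.ofAdd 1⟩
          = x ^ (1 : ℤ) * y ^ (0 : ℤ) * b ^ 1 := rfl
      rw [e, zpow_zero, mul_one, zpow_one, pow_one, x_def, mul_assoc, b_mul_b, mul_one]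

noncomputable def theIso : ↥Ggrp ≃* C2LtimesZ2 :=
  ((MonoidHom.ofInjective phi_inj).trans (MulEquiv.subgroupCongr phi_range)).symm

lemma a_ne_one : a ≠ 1 := by
  intro h
  have := Equiv.ext_iff.1 h [false]
  simp at this

lemma b_ne_one : b ≠ 1 := by
  intro h
  have := Equiv.ext_iff.1 h [false]
  simp at this

lemma c_ne_one : c ≠ 1 := by
  intro h
  have := Equiv.ext_iff.1 h [false, false]
  simp at this

lemma orderOf_a : orderOf a = 2 :=
  orderOf_eq_prime (by rw [pow_two]; exact a_mul_a) a_ne_one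
lemma orderOf_b : orderOf b = 2 :=
  orderOf_eq_prime (by rw [pow_two]; exact b_mul_b) b_ne_one
lemma orderOf_c : orderOf c = 2 :=
  orderOf_eq_prime (by rw [pow_two]; exact c_mul_c) c_ne_one

end Aut2277



/-- The group `G₂₂₇₇` generated by automaton 2277 is `C₂ ⋉ (ℤ × ℤ)`:
the generators have order 2, the subgroup `H = ⟨cb, ab⟩` is free abelian of
rank 2, normal of index 2 in `G₂₂₇₇`, conjugation by `b` inverts both `cb` and
`ab`, and `G₂₂₇₇` is isomorphic to the semidirect product `C₂ ⋉ (ℤ × ℤ)` with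
`C₂` acting by inversion. -/
theorem automaton2277_group_is_C2_ltimes_Z2 :
    orderOf a = 2 ∧ orderOf b = 2 ∧ orderOf c = 2 ∧
    Commute (c * b) (a * b) ∧
    (∀ m n : ℤ, (c * b) ^ m * (a * b) ^ n = 1 → m = 0 ∧ n = 0) ∧
    Subgroup.closure {c * b, a * b} ≤ Subgroup.closure {a, b, c} ∧
    ((Subgroup.closure {c * b, a * b}).subgroupOf
      (Subgroup.closure {a, b, c})).Normal ∧
    (Subgroup.closure {c * b, a * b}).relIndex (Subgroup.closure {a, b, c}) = 2 ∧
    b * (c * b) * b⁻¹ = (c * b)⁻¹ ∧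
    b * (a * b) * b⁻¹ = (a * b)⁻¹ ∧
    Nonempty (↥(Subgroup.closure {a, b, c}) ≃* C2LtimesZ2) := by
  refine ⟨Aut2277.orderOf_a, Aut2277.orderOf_b, Aut2277.orderOf_c, Aut2277.com_xy,
    fun m n h => Aut2277.free m n h, ?_, Aut2277.H_normal_in_G, Aut2277.relindex_two,
    Aut2277.b_conj_x, Aut2277.b_conj_y, ⟨Aut2277.theIso⟩⟩
  rw [Subgroup.closure_le]
  rintro t ht
  simp only [Set.mem_insert_iff, Set.mem_singleton_iff] at ht
  rcases ht with rfl | rfl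
  · exact mul_mem Aut2277.c_mem_G Aut2277.b_mem_G
  · exact mul_mem Aut2277.a_mem_G Aut2277.b_mem_G
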